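/- Let (X,r) be a square-free solution of arbitrary cardinality with mpl(X,r) = m < ∞ and m ≥ 2. Then for every x ∈ X the (m−1)-st retract class [x^{(m−1)}] = {ξ ∈ X : ξ and x have equal images in Ret^{m−1}(X,r)} is a proper subset of X which is invariant under the group G(X,r) generated by the left translations, and it contains the G(X,r)-orbit of x. In particular G(X,r) acts intransitively on X. -/

import Mathlib

namespace YBPaper

variable {X : Type*}

/-- Left translation: `lact r x y = ˣy`. -/
def lact (r : X × X → X × X) (x y : X) : X := (r (x, y)).1

/-- Right translation: `ract r x y = xʸ`. -/
def ract (r : X × X → X × X) (x y : X) : X := (r (x, y)).2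

def r12 (r : X × X → X × X) : X × X × X → X × X × X :=
  fun p => ((r (p.1, p.2.1)).1, (r (p.1, p.2.1)).2, p.2.2)

def r23 (r : X × X → X × X) : X × X × X → X × X × X :=
  fun p => (p.1, r (p.2.1, p.2.2))

/-- A non-degenerate involutive square-free set-theoretic solution of the YBE. -/
structure IsSquareFreeSolution (r : X × X → X × X) : Prop where
  nondegL : ∀ x : X, Function.Bijective fun y => (r (x, y)).1
  nondegR : ∀ y : X, Function.Bijective fun x => (r (x, y)).2
  invol : ∀ p : X × X, r (r p) = p
  sqfree : ∀ x : X, r (x, x) = (x, x)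
  braided : ∀ p : X × X × X, r12 r (r23 r (r12 r p)) = r23 r (r12 r (r23 r p))

/-- `relk l k x y` means the images of `x` and `y` in the `k`-th retract coincide. -/
def relk (l : X → X → X) : ℕ → X → X → Prop
  | 0 => fun x y => x = y
  | (k+1) => fun x y => ∀ z : X, relk l k (l x z) (l y z)

/-- `mplLe l m` : the `m`-th retract is a one-element solution, i.e. `mpl ≤ m`. -/
def mplLe (l : X → X → X) (m : ℕ) : Prop := ∀ x y : X, relk l m x y

/-- `mplEq l m` : the multipermutation level is exactly `m`. -/
def mplEq (l : X → X → X) (m : ℕ) : Prop := mplLe l m ∧ ∀ k < m, ¬ mplLe l k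

/-- The set of left translations, as permutations. -/
def lperms (r : X × X → X × X) : Set (Equiv.Perm X) :=
  {σ : Equiv.Perm X | ∃ x : X, ∀ y : X, σ y = (r (x, y)).1}

/-- The YB permutation group `𝒢(X,r)`, generated by the left translations. -/
def Gcal (r : X × X → X × X) : Subgroup (Equiv.Perm X) := Subgroup.closure (lperms r)



lemma relk_refl {l : X → X → X} : ∀ (k : ℕ) (x : X), relk l k x x
  | 0, _ => rfl
  | (k+1), x => fun z => relk_refl k (l x z)

lemma relk_symm {l : X → X → X} : ∀ (k : ℕ) {x y : X}, relk l k x y → relk l k y x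
  | 0, _, _, h => h.symm
  | (k+1), _, _, h => fun z => relk_symm k (h z)

lemma relk_trans {l : X → X → X} :
    ∀ (k : ℕ) {x y z : X}, relk l k x y → relk l k y z → relk l k x z
  | 0, _, _, _, h1, h2 => h1.trans h2
  | (k+1), _, _, _, h1, h2 => fun w => relk_trans k (h1 w) (h2 w)

/-- for `mpl(X,r) = m ≥ 2`, every `(m-1)`-st retract class is a proper
`𝒢(X,r)`-invariant subset of `X` containing the `𝒢(X,r)`-orbit; hence `𝒢(X,r)` acts
intransitively on `X`. -/
theorem stmt6 {X : Type*} (r : X × X → X × X) (h : IsSquareFreeSolution r)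
    (m : ℕ) (hm : 2 ≤ m) (hmpl : mplEq (lact r) m) (x : X) :
    {ξ : X | relk (lact r) (m - 1) ξ x} ≠ Set.univ ∧
    (∀ σ ∈ Gcal r, ∀ ξ : X, relk (lact r) (m - 1) ξ x → relk (lact r) (m - 1) (σ ξ) x) ∧
    MulAction.orbit (↥(Gcal r)) x ⊆ {ξ : X | relk (lact r) (m - 1) ξ x} ∧
    ¬ ∀ a b : X, b ∈ MulAction.orbit (↥(Gcal r)) a := by
  obtain ⟨k, rfl⟩ : ∃ k, m = k + 1 := ⟨m - 1, by omega⟩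
  simp only [Nat.add_sub_cancel]
  set l := lact r with hl
  have key : ∀ a b : X, relk l k (l a b) b := by
    intro a b
    have h1 := hmpl.1 a b b
    have h2 : l b b = b := by
      show (r (b, b)).1 = b
      rw [h.sqfree b]
    rwa [h2] at h1
  have hg : ∀ σ ∈ Gcal r, ∀ ξ : X, relk l k (σ ξ) ξ := by
    intro σ hσ
    refine Subgroup.closure_induction ?_ ?_ ?_ ?_ hσ
    · rintro τ ⟨a, ha⟩ ξ
      rw [ha ξ]
      exact key a ξ
    · intro ξ
      exact relk_refl k ξ
    · intro τ τ' _ _ h1 h2 ξ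
      exact relk_trans k (h1 (τ' ξ)) (h2 ξ)
    · intro τ _ h1 ξ
      have := h1 (τ⁻¹ ξ)
      rw [← Equiv.Perm.mul_apply, mul_inv_cancel, Equiv.Perm.one_apply] at this
      exact relk_symm k this
  obtain ⟨u, v, huv⟩ : ∃ u v : X, ¬ relk l k u v := by
    by_contra hc
    push_neg at hc
    exact hmpl.2 k (by omega) hc
  refine ⟨?_, ?_, ?_, ?_⟩
  · intro heq
    have hu : u ∈ {ξ : X | relk l k ξ x} := heq.ge (Set.mem_univ u)
    have hv : v ∈ {ξ : X | relk l k ξ x} := heq.ge (Set.mem_univ v)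
    exact huv (relk_trans k hu (relk_symm k hv))
  · intro σ hσ ξ hξ
    exact relk_trans k (hg σ hσ ξ) hξ
  · rintro ξ ⟨σ, rfl⟩
    exact hg (σ : Equiv.Perm X) σ.2 x
  · intro hall
    obtain ⟨σ, hσ⟩ := hall u v
    have : relk l k v u := hσ ▸ hg (σ : Equiv.Perm X) σ.2 u
    exact huv (relk_symm k this)


end YBPaper
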